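/- Let H be an RKHS on an open, bounded set Ω ⊆ ℝ^d with reproducing kernel k satisfying the kernel differentiability assumption of order s, and let D be a linear differential operator of order s with continuous, uniformly bounded coefficients. Then for any points x₁, …, x_n ∈ Ω and z₁, …, z_m ∈ Ω, the (n+m) × (n+m) block matrix [[K_{xx}, H_{xz}], [H_{xz}ᵀ, G_{zz}]], where [K_{xx}]_{ij} = k(x_i, x_j), [H_{xz}]_{ij} = (Id ⊗ D)k(x_i, z_j), and [G_{zz}]_{ij} = (D ⊗ D)k(z_i, z_j), is symmetric positive semidefinite. -/

import Mathlib

open scoped BigOperators RealInnerProductSpace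

/-- Partial derivative of `f` in coordinate direction `i`. -/
noncomputable def pderiv' {d : ℕ} (i : Fin d) (f : (Fin d → ℝ) → ℝ) :
    (Fin d → ℝ) → ℝ :=
  fun x => deriv (fun t => f (Function.update x i t)) (x i)

/-- The list of coordinate directions encoded by the multi-index `α`. -/
def pdSeq {d : ℕ} (α : Fin d → ℕ) : List (Fin d) :=
  (List.ofFn fun i : Fin d => List.replicate (α i) i).flatten

/-- The iterated partial derivative `∂^α f`. -/
noncomputable def multiPD {d : ℕ} (α : Fin d → ℕ) (f : (Fin d → ℝ) → ℝ) :
    (Fin d → ℝ) → ℝ :=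
  (pdSeq α).foldr pderiv' f

/-- `f` has a partial derivative in direction `i` at every point of `Ω`. -/
def PDiffOn {d : ℕ} (Ω : Set (Fin d → ℝ)) (i : Fin d) (f : (Fin d → ℝ) → ℝ) : Prop :=
  ∀ x ∈ Ω, DifferentiableAt ℝ (fun t => f (Function.update x i t)) (x i)

/-- All of the successive partial derivatives building `∂^α f` exist on `Ω`. -/
def MultiPDiffOn {d : ℕ} (Ω : Set (Fin d → ℝ)) (α : Fin d → ℕ)
    (f : (Fin d → ℝ) → ℝ) : Prop :=
  ∀ l₁ (i : Fin d) l₂, pdSeq α = l₁ ++ i :: l₂ →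
    PDiffOn Ω i (l₂.foldr pderiv' f)

/-- `∂₂^α k`: iterated partial derivative in the second argument of a kernel. -/
noncomputable def pd2 {d : ℕ} (α : Fin d → ℕ) (k : (Fin d → ℝ) → (Fin d → ℝ) → ℝ) :
    (Fin d → ℝ) → (Fin d → ℝ) → ℝ :=
  fun x y => multiPD α (fun y' => k x y') y

/-- `∂₁^α ∂₂^α k`: mixed iterated partial derivative of a kernel. -/
noncomputable def kmix {d : ℕ} (α : Fin d → ℕ) (k : (Fin d → ℝ) → (Fin d → ℝ) → ℝ) :
    (Fin d → ℝ) → (Fin d → ℝ) → ℝ :=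
  fun x y => multiPD α (fun x' => pd2 α k x' y) x

/-- Kernel differentiability assumption of order `s`: all mixed partial derivatives
`∂₁^α ∂₂^α k` with `‖α‖₁ ≤ s` exist and are continuous on `Ω × Ω`. -/
def KernelDiff {d : ℕ} (Ω : Set (Fin d → ℝ)) (s : ℕ)
    (k : (Fin d → ℝ) → (Fin d → ℝ) → ℝ) : Prop :=
  ∀ α : Fin d → ℕ, (∑ i, α i) ≤ s →
    (∀ x ∈ Ω, MultiPDiffOn Ω α (fun y => k x y)) ∧
    (∀ y ∈ Ω, MultiPDiffOn Ω α (fun x => pd2 α k x y)) ∧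
    ContinuousOn (fun p : (Fin d → ℝ) × (Fin d → ℝ) => kmix α k p.1 p.2) (Ω ×ˢ Ω)

/-- The linear differential operator of order `s` with coefficients `c`:
`D f (x) = ∑_{‖α‖₁ ≤ s} c_α(x) ∂^α f(x)`. -/
noncomputable def Dop {d : ℕ} (s : ℕ) (c : (Fin d → ℕ) → (Fin d → ℝ) → ℝ)
    (f : (Fin d → ℝ) → ℝ) : (Fin d → ℝ) → ℝ :=
  fun x => ∑ α : Fin d → Fin (s + 1),
    if (∑ i, (α i : ℕ)) ≤ s then
      c (fun i => (α i : ℕ)) x * multiPD (fun i => (α i : ℕ)) f x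
    else 0

/-- The coefficients of the differential operator are continuous and uniformly bounded on `Ω`. -/
def CoeffCBdd {d : ℕ} (Ω : Set (Fin d → ℝ)) (s : ℕ)
    (c : (Fin d → ℕ) → (Fin d → ℝ) → ℝ) : Prop :=
  ∀ α : Fin d → ℕ, (∑ i, α i) ≤ s →
    ContinuousOn (c α) Ω ∧ ∃ C : ℝ, ∀ x ∈ Ω, |c α x| ≤ C

/-- `(D ⊗ Id) k`: the operator applied to the first argument of the kernel. -/
noncomputable def DIdk {d : ℕ} (s : ℕ) (c : (Fin d → ℕ) → (Fin d → ℝ) → ℝ)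
    (k : (Fin d → ℝ) → (Fin d → ℝ) → ℝ) : (Fin d → ℝ) → (Fin d → ℝ) → ℝ :=
  fun x z => Dop s c (fun x' => k x' z) x

/-- `(Id ⊗ D) k`: the operator applied to the second argument of the kernel. -/
noncomputable def IdDk {d : ℕ} (s : ℕ) (c : (Fin d → ℕ) → (Fin d → ℝ) → ℝ)
    (k : (Fin d → ℝ) → (Fin d → ℝ) → ℝ) : (Fin d → ℝ) → (Fin d → ℝ) → ℝ :=
  fun x z => Dop s c (fun z' => k x z') z

/-- `(D ⊗ D) k`: the operator applied to both arguments of the kernel. -/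
noncomputable def DDk {d : ℕ} (s : ℕ) (c : (Fin d → ℕ) → (Fin d → ℝ) → ℝ)
    (k : (Fin d → ℝ) → (Fin d → ℝ) → ℝ) : (Fin d → ℝ) → (Fin d → ℝ) → ℝ :=
  fun z z' => Dop s c (fun u => Dop s c (fun v => k u v) z') z


namespace S3

variable {d : ℕ}

def eu (i : Fin d) : Fin d → ℝ := Pi.single i 1

lemma norm_eu (i : Fin d) : ‖eu i‖ = 1 := by
  rw [eu, Pi.norm_single]; exact norm_one

lemma norm_smul_eu (t : ℝ) (i : Fin d) : ‖t • eu i‖ = |t| := by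
  rw [norm_smul, norm_eu, Real.norm_eq_abs, mul_one]

lemma update_eq_add (z : Fin d → ℝ) (i : Fin d) (t : ℝ) :
    Function.update z i t = z + (t - z i) • eu i := by
  funext j
  by_cases h : j = i
  · subst h; simp [eu, Function.update, Pi.single_apply]
  · simp [eu, Function.update, h, Pi.single_apply, Ne.symm h]

section E
variable {E : Type*} [NormedAddCommGroup E] [NormedSpace ℝ E]

def HasPD (i : Fin d) (f : (Fin d → ℝ) → E) (z : Fin d → ℝ) (c : E) : Prop :=
  HasDerivAt (fun t => f (Function.update z i t)) c (z i)

lemma hasPD_iff_line {i : Fin d} {f : (Fin d → ℝ) → E} {z : Fin d → ℝ} {c : E} :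
    HasPD i f z c ↔ HasDerivAt (fun s : ℝ => f (z + s • eu i)) c 0 := by
  constructor
  · intro h
    have h2 : HasDerivAt (fun s : ℝ => s + z i) 1 0 := by
      simpa using (hasDerivAt_id (0:ℝ)).add_const (z i)
    have h3 : HasDerivAt ((fun t => f (Function.update z i t)) ∘ (fun s : ℝ => s + z i)) ((1:ℝ) • c) (0:ℝ) :=
      HasDerivAt.scomp (0:ℝ) (by simpa [HasPD] using h) h2
    have he : ((fun t => f (Function.update z i t)) ∘ (fun s : ℝ => s + z i)) =
        fun s : ℝ => f (z + s • eu i) := by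
      funext s; simp only [Function.comp]; rw [update_eq_add]; ring_nf
    rw [he] at h3; simpa using h3
  · intro h
    have h2 : HasDerivAt (fun t : ℝ => t - z i) 1 (z i) := by
      simpa using (hasDerivAt_id (z i)).sub_const (z i)
    have h3 : HasDerivAt ((fun s : ℝ => f (z + s • eu i)) ∘ (fun t : ℝ => t - z i)) ((1:ℝ) • c) (z i) :=
      HasDerivAt.scomp (z i) (by simpa using h) h2
    have he : ((fun s : ℝ => f (z + s • eu i)) ∘ (fun t : ℝ => t - z i)) =
        fun t : ℝ => f (Function.update z i t) := by
      funext t; simp only [Function.comp]; rw [update_eq_add]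
    rw [he] at h3; simpa [HasPD] using h3

noncomputable def Dq : List (Fin d × ℝ) → ((Fin d → ℝ) → E) → (Fin d → ℝ) → E
  | [], f, z => f z
  | p :: S, f, z => p.2⁻¹ • (Dq S f (z + p.2 • eu p.1) - Dq S f z)

def sumAbs (S : List (Fin d × ℝ)) : ℝ := (S.map fun p => |p.2|).sum

lemma sumAbs_nil : sumAbs ([] : List (Fin d × ℝ)) = 0 := rfl

lemma sumAbs_cons (p : Fin d × ℝ) (S : List (Fin d × ℝ)) :
    sumAbs (p :: S) = |p.2| + sumAbs S := by simp [sumAbs]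

lemma sumAbs_append (S T : List (Fin d × ℝ)) :
    sumAbs (S ++ T) = sumAbs S + sumAbs T := by simp [sumAbs]

lemma sumAbs_nonneg (S : List (Fin d × ℝ)) : 0 ≤ sumAbs S := by
  induction S with
  | nil => simp [sumAbs]
  | cons p S ih => rw [sumAbs_cons]; positivity

lemma shift_mem_closedBall {z c : Fin d → ℝ} {r R : ℝ} (h : dist z c + r ≤ R)
    {t : ℝ} {i : Fin d} (ht : |t| ≤ r) : dist (z + t • eu i) c + (r - |t|) ≤ R := by
  have := dist_triangle (z + t • eu i) z c
  have h2 : dist (z + t • eu i) z = |t| := by rw [dist_self_add_left, norm_smul_eu]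
  linarith

lemma Dq_congr {S : List (Fin d × ℝ)} {f g : (Fin d → ℝ) → E} {z c : Fin d → ℝ} {R : ℝ}
    (hz : dist z c + sumAbs S ≤ R)
    (h : ∀ y ∈ Metric.closedBall c R, f y = g y) :
    Dq S f z = Dq S g z := by
  induction S generalizing z with
  | nil =>
    exact h z (by simpa [Metric.mem_closedBall] using (by simpa [sumAbs_nil] using hz))
  | cons p S ih =>
    rw [sumAbs_cons] at hz
    have h1 : dist (z + p.2 • eu p.1) c + sumAbs S ≤ R := by
      have := shift_mem_closedBall (t := p.2) (i := p.1) (r := |p.2| + sumAbs S) hz (by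
        have := sumAbs_nonneg S; linarith)
      linarith
    have h2 : dist z c + sumAbs S ≤ R := by
      have := abs_nonneg p.2; linarith
    rw [Dq, Dq, ih h1, ih h2]

lemma Dq_sub (S : List (Fin d × ℝ)) (f g : (Fin d → ℝ) → E) (z : Fin d → ℝ) :
    Dq S (fun y => f y - g y) z = Dq S f z - Dq S g z := by
  induction S generalizing z with
  | nil => rfl
  | cons p S ih => simp only [Dq, ih, smul_sub]; abel

lemma Dq_smul (S : List (Fin d × ℝ)) (a : ℝ) (f : (Fin d → ℝ) → E) (z : Fin d → ℝ) :
    Dq S (fun y => a • f y) z = a • Dq S f z := by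
  induction S generalizing z with
  | nil => rfl
  | cons p S ih => simp only [Dq, ih, smul_sub, smul_comm p.2⁻¹ a]

lemma Dq_snoc (S : List (Fin d × ℝ)) (q : Fin d × ℝ) (f : (Fin d → ℝ) → E) (z : Fin d → ℝ) :
    Dq (S ++ [q]) f z = q.2⁻¹ • (Dq S f (z + q.2 • eu q.1) - Dq S f z) := by
  induction S generalizing z with
  | nil => rfl
  | cons p S ih =>
    have hpt : z + q.2 • eu q.1 + p.2 • eu p.1 = z + p.2 • eu p.1 + q.2 • eu q.1 :=
      add_right_comm _ _ _
    simp only [List.cons_append, Dq, List.append_eq, ih]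
    rw [hpt]
    simp only [smul_sub, smul_comm p.2⁻¹ q.2⁻¹, ← add_assoc]
    abel



lemma abs_le_of_mem_uIcc {s t : ℝ} (h : s ∈ Set.uIcc (0:ℝ) t) : |s| ≤ |t| := by
  rcases Set.mem_uIcc.1 h with ⟨h1, h2⟩ | ⟨h1, h2⟩
  · rw [abs_of_nonneg h1]; exact le_trans h2 (le_abs_self t)
  · rw [abs_of_nonpos h2]; exact le_trans (neg_le_neg h1) (neg_le_abs t)

lemma hasDerivAt_unshift {G : ℝ → E} {c : E} {s : ℝ}
    (h : HasDerivAt (fun σ => G (s + σ)) c 0) : HasDerivAt G c s := by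
  have h2 : HasDerivAt (fun x : ℝ => x - s) 1 s := by
    simpa using (hasDerivAt_id s).sub_const s
  have h3 : HasDerivAt ((fun σ => G (s + σ)) ∘ (fun x : ℝ => x - s)) ((1:ℝ) • c) s :=
    HasDerivAt.scomp s (by simpa using h) h2
  have he : ((fun σ => G (s + σ)) ∘ (fun x : ℝ => x - s)) = G := by
    funext x; simp [Function.comp]
  rw [he] at h3; simpa using h3

lemma Dq_line_hasDeriv {f g : (Fin d → ℝ) → E} {i : Fin d} {c : Fin d → ℝ} {R : ℝ}
    (hf : ∀ y ∈ Metric.closedBall c R, HasDerivAt (fun s : ℝ => f (y + s • eu i)) (g y) 0) :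
    ∀ (S : List (Fin d × ℝ)) (z : Fin d → ℝ), dist z c + sumAbs S ≤ R →
      HasDerivAt (fun s : ℝ => Dq S f (z + s • eu i)) (Dq S g z) 0 := by
  intro S
  induction S with
  | nil =>
    intro z hz
    exact hf z (by simpa [Metric.mem_closedBall] using by simpa [sumAbs] using hz)
  | cons p S ih =>
    intro z hz
    rw [sumAbs_cons] at hz
    have hdz : dist (z + p.2 • eu p.1) z = |p.2| := by
      rw [dist_self_add_left, norm_smul_eu]
    have h1 : HasDerivAt (fun s : ℝ => Dq S f ((z + p.2 • eu p.1) + s • eu i))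
        (Dq S g (z + p.2 • eu p.1)) 0 := by
      apply ih
      have := dist_triangle (z + p.2 • eu p.1) z c
      linarith
    have h2 : HasDerivAt (fun s : ℝ => Dq S f (z + s • eu i)) (Dq S g z) 0 := by
      apply ih
      have := abs_nonneg p.2
      linarith
    have h3 := (h1.sub h2).const_smul p.2⁻¹
    have he : (fun s : ℝ => Dq (p :: S) f (z + s • eu i)) =
        fun s : ℝ => p.2⁻¹ • (Dq S f ((z + p.2 • eu p.1) + s • eu i) - Dq S f (z + s • eu i)) := by
      funext s
      show p.2⁻¹ • (Dq S f ((z + s • eu i) + p.2 • eu p.1) - Dq S f (z + s • eu i)) = _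
      rw [add_right_comm]
    rw [he]
    exact h3

lemma mvt_quot {φ φ' : ℝ → ℝ} {t : ℝ} (ht : t ≠ 0)
    (h : ∀ s ∈ Set.uIcc (0:ℝ) t, HasDerivAt φ (φ' s) s) :
    ∃ θ ∈ Set.uIcc (0:ℝ) t, t⁻¹ * (φ t - φ 0) = φ' θ := by
  rcases ht.lt_or_gt with hlt | hlt
  · have huIcc : Set.uIcc (0:ℝ) t = Set.Icc t 0 := by
      rw [Set.uIcc_of_ge hlt.le]
    have hcont : ContinuousOn φ (Set.Icc t 0) := by
      intro x hx
      exact (h x (by rw [huIcc]; exact hx)).continuousAt.continuousWithinAt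
    obtain ⟨θ, hθ, heq⟩ := exists_hasDerivAt_eq_slope φ φ' hlt hcont
      (fun x hx => h x (by rw [huIcc]; exact Set.Ioo_subset_Icc_self hx))
    refine ⟨θ, by rw [huIcc]; exact Set.Ioo_subset_Icc_self hθ, ?_⟩
    rw [heq, zero_sub, div_neg, ← neg_div, neg_sub, div_eq_mul_inv, mul_comm]
  · have huIcc : Set.uIcc (0:ℝ) t = Set.Icc 0 t := by
      rw [Set.uIcc_of_le hlt.le]
    have hcont : ContinuousOn φ (Set.Icc 0 t) := by
      intro x hx
      exact (h x (by rw [huIcc]; exact hx)).continuousAt.continuousWithinAt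
    obtain ⟨θ, hθ, heq⟩ := exists_hasDerivAt_eq_slope φ φ' hlt hcont
      (fun x hx => h x (by rw [huIcc]; exact Set.Ioo_subset_Icc_self hx))
    refine ⟨θ, by rw [huIcc]; exact Set.Ioo_subset_Icc_self hθ, ?_⟩
    rw [heq]
    field_simp
    ring


end E


theorem peel {c : Fin d → ℝ} {R : ℝ} :
    ∀ (S : List (Fin d × ℝ)) (L : List (Fin d)) (f : (Fin d → ℝ) → ℝ),
    S.map Prod.fst = L → (∀ p ∈ S, p.2 ≠ 0) →
    (∀ l₁ (i : Fin d) l₂, L = l₁ ++ i :: l₂ → ∀ y ∈ Metric.closedBall c R,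
      HasDerivAt (fun s : ℝ => (l₂.foldr pderiv' f) (y + s • eu i))
        (pderiv' i (l₂.foldr pderiv' f) y) 0) →
    ∀ z : Fin d → ℝ, dist z c + sumAbs S ≤ R →
    ∃ ξ, dist ξ c ≤ dist z c + sumAbs S ∧ Dq S f z = (L.foldr pderiv' f) ξ := by
  intro S
  induction S using List.reverseRecOn with
  | nil =>
    intro L f hdir _ _ z hz
    obtain rfl : L = [] := by simpa using hdir.symm
    exact ⟨z, by simpa [sumAbs] using le_refl _, rfl⟩
  | append_singleton S q ih =>
    intro L f hdir hne hch z hz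
    have hL : L = (S.map Prod.fst) ++ [q.1] := by
      rw [← hdir, List.map_append]; rfl
    have hqne : q.2 ≠ 0 := hne q (by simp)
    -- single-direction line derivative hypothesis for f
    have hf : ∀ y ∈ Metric.closedBall c R,
        HasDerivAt (fun s : ℝ => f (y + s • eu q.1)) (pderiv' q.1 f y) 0 := by
      intro y hy
      have := hch (S.map Prod.fst) q.1 [] (by rw [hL]) y hy
      simpa using this
    have hsum : sumAbs (S ++ [q]) = sumAbs S + |q.2| := by
      rw [sumAbs_append]; simp [sumAbs]
    -- MVT
    have hderiv : ∀ s ∈ Set.uIcc (0:ℝ) q.2,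
        HasDerivAt (fun s' : ℝ => Dq S f (z + s' • eu q.1))
          (Dq S (pderiv' q.1 f) (z + s • eu q.1)) s := by
      intro s hs
      apply hasDerivAt_unshift
      have h1 : HasDerivAt (fun σ : ℝ => Dq S f ((z + s • eu q.1) + σ • eu q.1))
          (Dq S (pderiv' q.1 f) (z + s • eu q.1)) 0 := by
        apply Dq_line_hasDeriv hf
        have h2 : dist (z + s • eu q.1) z = |s| := by
          rw [dist_self_add_left, norm_smul_eu]
        have h3 := dist_triangle (z + s • eu q.1) z c
        have h4 := abs_le_of_mem_uIcc hs
        rw [hsum] at hz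
        linarith
      have he : (fun σ : ℝ => Dq S f (z + (s + σ) • eu q.1)) =
          (fun σ : ℝ => Dq S f ((z + s • eu q.1) + σ • eu q.1)) := by
        funext σ; rw [add_smul, add_assoc]
      rw [he]
      exact h1
    obtain ⟨θ, hθmem, hθ⟩ := mvt_quot hqne hderiv
    have hθabs := abs_le_of_mem_uIcc hθmem
    have hval : Dq (S ++ [q]) f z = Dq S (pderiv' q.1 f) (z + θ • eu q.1) := by
      rw [Dq_snoc, smul_eq_mul, ← hθ]
      congr 2
      simp
    -- apply IH
    have hch' : ∀ l₁ (i : Fin d) l₂, (S.map Prod.fst) = l₁ ++ i :: l₂ →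
        ∀ y ∈ Metric.closedBall c R,
        HasDerivAt (fun s : ℝ => (l₂.foldr pderiv' (pderiv' q.1 f)) (y + s • eu i))
          (pderiv' i (l₂.foldr pderiv' (pderiv' q.1 f)) y) 0 := by
      intro l₁ i l₂ hdec y hy
      have hfold : (l₂ ++ [q.1]).foldr pderiv' f = l₂.foldr pderiv' (pderiv' q.1 f) := by
        simp [List.foldr_append]
      have := hch l₁ i (l₂ ++ [q.1]) (by rw [hL, hdec, List.append_assoc]; rfl) y hy
      rw [hfold] at this
      exact this
    have hz' : dist (z + θ • eu q.1) c + sumAbs S ≤ R := by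
      have h2 : dist (z + θ • eu q.1) z = |θ| := by
        rw [dist_self_add_left, norm_smul_eu]
      have h3 := dist_triangle (z + θ • eu q.1) z c
      rw [hsum] at hz
      linarith
    obtain ⟨ξ, hξ1, hξ2⟩ := ih (S.map Prod.fst) (pderiv' q.1 f) rfl
      (fun p hp => hne p (by simp [hp])) hch' (z + θ • eu q.1) hz'
    refine ⟨ξ, ?_, ?_⟩
    · have h2 : dist (z + θ • eu q.1) z = |θ| := by
        rw [dist_self_add_left, norm_smul_eu]
      have h3 := dist_triangle (z + θ • eu q.1) z c
      rw [hsum]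
      linarith
    · rw [hval, hξ2, hL]
      simp [List.foldr_append]


section congr

lemma hasPD_deriv {i : Fin d} {f : (Fin d → ℝ) → ℝ} {z : Fin d → ℝ} {c : ℝ}
    (h : HasPD i f z c) : pderiv' i f z = c := h.deriv

lemma continuous_line (z : Fin d → ℝ) (i : Fin d) : Continuous (fun s : ℝ => z + s • eu i) :=
  continuous_const.add (continuous_id.smul continuous_const)

lemma pdiffOn_line {Ω : Set (Fin d → ℝ)} {i : Fin d} {f : (Fin d → ℝ) → ℝ}
    (hp : PDiffOn Ω i f) {y : Fin d → ℝ} (hy : y ∈ Ω) :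
    HasDerivAt (fun s : ℝ => f (y + s • eu i)) (pderiv' i f y) 0 :=
  hasPD_iff_line.1 ((hp y hy).hasDerivAt)

lemma pderiv'_congrOn {Ω : Set (Fin d → ℝ)} (hΩ : IsOpen Ω) {f g : (Fin d → ℝ) → ℝ}
    (h : ∀ y ∈ Ω, f y = g y) {i : Fin d} {z : Fin d → ℝ} (hz : z ∈ Ω) :
    pderiv' i f z = pderiv' i g z := by
  have hc : ContinuousAt (fun t : ℝ => Function.update z i t) (z i) := by
    have : Continuous (fun t : ℝ => Function.update z i t) := by
      have he : (fun t : ℝ => Function.update z i t) = fun t => z + (t - z i) • eu i := by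
        funext t; exact update_eq_add z i t
      rw [he]
      exact continuous_const.add ((continuous_id.sub continuous_const).smul continuous_const)
    exact this.continuousAt
  have hmem : Ω ∈ nhds (Function.update z i (z i)) := by
    rw [Function.update_eq_self]; exact hΩ.mem_nhds hz
  have hev : (fun t => f (Function.update z i t)) =ᶠ[nhds (z i)] fun t => g (Function.update z i t) := by
    filter_upwards [hc.preimage_mem_nhds hmem] with t ht
    exact h _ ht
  exact hev.deriv_eq

lemma foldr_congrOn {Ω : Set (Fin d → ℝ)} (hΩ : IsOpen Ω) {f g : (Fin d → ℝ) → ℝ}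
    (h : ∀ y ∈ Ω, f y = g y) (L : List (Fin d)) :
    ∀ y ∈ Ω, (L.foldr pderiv' f) y = (L.foldr pderiv' g) y := by
  induction L with
  | nil => exact h
  | cons j L ih =>
    intro y hy
    exact pderiv'_congrOn hΩ ih hy

end congr

section inner_lemmas
variable {F : Type*} [NormedAddCommGroup F] [InnerProductSpace ℝ F]

lemma Dq_inner_right (S : List (Fin d × ℝ)) (w : F) (Φ : (Fin d → ℝ) → F) (z : Fin d → ℝ) :
    ⟪w, Dq S Φ z⟫ = Dq S (fun y => ⟪w, Φ y⟫) z := by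
  induction S generalizing z with
  | nil => rfl
  | cons p S ih =>
    show ⟪w, p.2⁻¹ • (Dq S Φ (z + p.2 • eu p.1) - Dq S Φ z)⟫ = _
    rw [real_inner_smul_right, inner_sub_right, ih, ih]
    rfl

lemma Dq_inner_left (S : List (Fin d × ℝ)) (w : F) (Φ : (Fin d → ℝ) → F) (z : Fin d → ℝ) :
    ⟪Dq S Φ z, w⟫ = Dq S (fun y => ⟪Φ y, w⟫) z := by
  induction S generalizing z with
  | nil => rfl
  | cons p S ih =>
    show ⟪p.2⁻¹ • (Dq S Φ (z + p.2 • eu p.1) - Dq S Φ z), w⟫ = _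
    rw [real_inner_smul_left, inner_sub_left, ih, ih]
    rfl

end inner_lemmas

section swap
variable {E : Type*} [NormedAddCommGroup E] [NormedSpace ℝ E]

lemma Dq_swap (S T : List (Fin d × ℝ)) (g : (Fin d → ℝ) → (Fin d → ℝ) → E)
    (z z' : Fin d → ℝ) :
    Dq S (fun u => Dq T (g u) z') z = Dq T (fun y => Dq S (fun u => g u y) z) z' := by
  induction S generalizing z with
  | nil => rfl
  | cons p S ih =>
    show p.2⁻¹ • (Dq S (fun u => Dq T (g u) z') (z + p.2 • eu p.1) - Dq S (fun u => Dq T (g u) z') z) = _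
    rw [ih, ih, ← Dq_sub, ← Dq_smul]
    rfl

lemma Dq_hasDeriv_other {g : (Fin d → ℝ) → (Fin d → ℝ) → E} {g' : (Fin d → ℝ) → E} {i : Fin d}
    {y₀ : Fin d → ℝ} :
    ∀ (S : List (Fin d × ℝ)) (z : Fin d → ℝ),
    (∀ u ∈ Metric.closedBall z (sumAbs S), HasDerivAt (fun s : ℝ => g u (y₀ + s • eu i)) (g' u) 0) →
    HasDerivAt (fun s : ℝ => Dq S (fun u => g u (y₀ + s • eu i)) z) (Dq S g' z) 0 := by
  intro S
  induction S with
  | nil =>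
    intro z hg
    exact hg z (by simp [Metric.mem_closedBall, sumAbs])
  | cons p S ih =>
    intro z hg
    have hsub : ∀ w : Fin d → ℝ, dist w z ≤ |p.2| →
        ∀ u ∈ Metric.closedBall w (sumAbs S), u ∈ Metric.closedBall z (sumAbs (p :: S)) := by
      intro w hw u hu
      rw [Metric.mem_closedBall] at hu ⊢
      rw [sumAbs_cons]
      have := dist_triangle u w z
      linarith
    have h1 := ih (z + p.2 • eu p.1) (fun u hu => hg u (hsub _ (by
      rw [dist_self_add_left, norm_smul_eu]) u hu))
    have h2 := ih z (fun u hu => hg u (hsub z (by simp) u hu))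
    have h3 := (h1.sub h2).const_smul p.2⁻¹
    exact h3

end swap

section chainDq
variable {Ω : Set (Fin d → ℝ)}

lemma chain_Dq (hΩ : IsOpen Ω) {g : (Fin d → ℝ) → (Fin d → ℝ) → ℝ} {L : List (Fin d)}
    (hch : ∀ u ∈ Ω, ∀ l₁ (i : Fin d) l₂, L = l₁ ++ i :: l₂ →
      PDiffOn Ω i (l₂.foldr pderiv' (g u)))
    (S : List (Fin d × ℝ)) (z : Fin d → ℝ) (hS : Metric.closedBall z (sumAbs S) ⊆ Ω) :
    ∀ l₂, l₂ <:+ L → ∀ y ∈ Ω,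
      (l₂.foldr pderiv' (fun y' => Dq S (fun u => g u y') z)) y
        = Dq S (fun u => (l₂.foldr pderiv' (g u)) y) z := by
  intro l₂ hsuf
  induction l₂ with
  | nil => intro y _; rfl
  | cons j l₂ ih =>
    intro y hy
    have hsuf' : l₂ <:+ L := ((l₂.suffix_cons j).trans hsuf)
    obtain ⟨l₁, hl₁⟩ := hsuf
    have hdq : HasDerivAt
        (fun s : ℝ => Dq S (fun u => (l₂.foldr pderiv' (g u)) (y + s • eu j)) z)
        (Dq S (fun u => pderiv' j (l₂.foldr pderiv' (g u)) y) z) 0 := by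
      apply Dq_hasDeriv_other
      intro u hu
      exact pdiffOn_line (hch u (hS hu) l₁ j l₂ hl₁.symm) hy
    have hG : pderiv' j (fun y' => Dq S (fun u => (l₂.foldr pderiv' (g u)) y') z) y
        = Dq S (fun u => pderiv' j (l₂.foldr pderiv' (g u)) y) z :=
      hasPD_deriv (hasPD_iff_line.2 hdq)
    show pderiv' j ((l₂.foldr pderiv' (fun y' => Dq S (fun u => g u y') z))) y = _
    rw [pderiv'_congrOn hΩ (ih hsuf') hy, hG]
    rfl

lemma chain_Dq_line (hΩ : IsOpen Ω) {g : (Fin d → ℝ) → (Fin d → ℝ) → ℝ} {L : List (Fin d)}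
    (hch : ∀ u ∈ Ω, ∀ l₁ (i : Fin d) l₂, L = l₁ ++ i :: l₂ →
      PDiffOn Ω i (l₂.foldr pderiv' (g u)))
    (S : List (Fin d × ℝ)) (z : Fin d → ℝ) (hS : Metric.closedBall z (sumAbs S) ⊆ Ω)
    {c' : Fin d → ℝ} {R' : ℝ} (hB : Metric.closedBall c' R' ⊆ Ω) :
    ∀ l₁ (i : Fin d) l₂, L = l₁ ++ i :: l₂ → ∀ y ∈ Metric.closedBall c' R',
      HasDerivAt (fun s : ℝ =>
          (l₂.foldr pderiv' (fun y' => Dq S (fun u => g u y') z)) (y + s • eu i))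
        (pderiv' i (l₂.foldr pderiv' (fun y' => Dq S (fun u => g u y') z)) y) 0 := by
  intro l₁ i l₂ hdec y hy
  have hyΩ : y ∈ Ω := hB hy
  have hsuf2 : (i :: l₂) <:+ L := ⟨l₁, hdec.symm⟩
  have hsuf : l₂ <:+ L := (l₂.suffix_cons i).trans hsuf2
  have hdq : HasDerivAt
      (fun s : ℝ => Dq S (fun u => (l₂.foldr pderiv' (g u)) (y + s • eu i)) z)
      (Dq S (fun u => pderiv' i (l₂.foldr pderiv' (g u)) y) z) 0 := by
    apply Dq_hasDeriv_other
    intro u hu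
    exact pdiffOn_line (hch u (hS hu) l₁ i l₂ hdec) hyΩ
  have hvalue : Dq S (fun u => pderiv' i (l₂.foldr pderiv' (g u)) y) z
      = pderiv' i (l₂.foldr pderiv' (fun y' => Dq S (fun u => g u y') z)) y := by
    have := chain_Dq hΩ hch S z hS (i :: l₂) hsuf2 y hyΩ
    exact this.symm
  rw [hvalue] at hdq
  apply hdq.congr_of_eventuallyEq
  have hmem : {s : ℝ | y + s • eu i ∈ Ω} ∈ nhds (0:ℝ) := by
    have : (fun s : ℝ => y + s • eu i) ⁻¹' Ω ∈ nhds (0:ℝ) := by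
      apply (continuous_line y i).continuousAt.preimage_mem_nhds
      simpa using hΩ.mem_nhds hyΩ
    exact this
  filter_upwards [hmem] with s hs
  exact (chain_Dq hΩ hch S z hS l₂ hsuf (y + s • eu i) hs)

end chainDq

section main
variable {Ω : Set (Fin d → ℝ)}
variable {H : Type*} [NormedAddCommGroup H] [InnerProductSpace ℝ H] [CompleteSpace H]
variable {Φ : (Fin d → ℝ) → H} {k : (Fin d → ℝ) → (Fin d → ℝ) → ℝ}

/-- Hypothesis bundle for the list `L` of directions. -/
def HypL (Ω : Set (Fin d → ℝ)) (k : (Fin d → ℝ) → (Fin d → ℝ) → ℝ) (L : List (Fin d)) : Prop :=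
  (∀ x ∈ Ω, ∀ l₁ (i : Fin d) l₂, L = l₁ ++ i :: l₂ →
      PDiffOn Ω i (l₂.foldr pderiv' (fun y => k x y))) ∧
  (∀ y ∈ Ω, ∀ l₁ (i : Fin d) l₂, L = l₁ ++ i :: l₂ →
      PDiffOn Ω i (l₂.foldr pderiv' (fun x => (L.foldr pderiv' (fun y' => k x y')) y))) ∧
  ContinuousOn (fun p : (Fin d → ℝ) × (Fin d → ℝ) =>
      (L.foldr pderiv' (fun x => (L.foldr pderiv' (fun y' => k x y')) p.2)) p.1) (Ω ×ˢ Ω)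

lemma sumAbs_le_len {S : List (Fin d × ℝ)} {δ : ℝ} (h : ∀ p ∈ S, |p.2| ≤ δ) :
    sumAbs S ≤ S.length * δ := by
  induction S with
  | nil => simp [sumAbs]
  | cons p S ih =>
    rw [sumAbs_cons]
    have h1 := h p (by simp)
    have h2 := ih (fun q hq => h q (by simp [hq]))
    simp only [List.length_cons]
    push_cast
    linarith

theorem key_identity (hΩ : IsOpen Ω) (hkΦ : ∀ x ∈ Ω, ∀ y ∈ Ω, k x y = ⟪Φ x, Φ y⟫)
    {L : List (Fin d)} (hyp : HypL Ω k L) {z z' : Fin d → ℝ} (hz' : z' ∈ Ω)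
    {r : ℝ} (hball : Metric.closedBall z r ⊆ Ω) (hball' : Metric.closedBall z' r ⊆ Ω)
    (S T : List (Fin d × ℝ)) (hS : S.map Prod.fst = L) (hT : T.map Prod.fst = L)
    (hSne : ∀ p ∈ S, p.2 ≠ 0) (hTne : ∀ p ∈ T, p.2 ≠ 0)
    (hSsm : sumAbs S ≤ r) (hTsm : sumAbs T ≤ r) :
    ∃ ζ, dist ζ z ≤ sumAbs S ∧ ζ ∈ Ω ∧ ∃ ξ, dist ξ z' ≤ sumAbs T ∧ ξ ∈ Ω ∧
      ⟪Dq S Φ z, Dq T Φ z'⟫ =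
        (L.foldr pderiv' (fun x => (L.foldr pderiv' (fun y' => k x y')) ξ)) ζ := by
  have hSball : Metric.closedBall z (sumAbs S) ⊆ Ω :=
    fun u hu => hball (Metric.closedBall_subset_closedBall hSsm hu)
  have hTball : Metric.closedBall z' (sumAbs T) ⊆ Ω :=
    fun u hu => hball' (Metric.closedBall_subset_closedBall hTsm hu)
  -- step 1 : inner product as double difference quotient of k
  have h1 : ⟪Dq S Φ z, Dq T Φ z'⟫ = Dq T (fun y => Dq S (fun u => k u y) z) z' := by
    rw [Dq_inner_left]
    have he : (fun u => ⟪Φ u, Dq T Φ z'⟫) = fun u => Dq T (fun y => ⟪Φ u, Φ y⟫) z' := by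
      funext u; exact Dq_inner_right T (Φ u) Φ z'
    rw [he, Dq_swap]
    apply Dq_congr (c := z') (R := sumAbs T) (by simp)
    intro y hy
    apply Dq_congr (c := z) (R := sumAbs S) (by simp)
    intro u hu
    exact (hkΦ u (hSball hu) y (hTball hy)).symm
  -- step 2 : peel the second slot
  have hch2 := chain_Dq_line hΩ (g := fun u y => k u y) (L := L) hyp.1 S z hSball
    (c' := z') (R' := r) hball'
  obtain ⟨ξ, hξd, hξv⟩ := peel (c := z') (R := r) T L
    (fun y => Dq S (fun u => k u y) z) hT hTne hch2 z' (by simpa using hTsm)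
  rw [dist_self, zero_add] at hξd
  have hξΩ : ξ ∈ Ω := hTball (Metric.mem_closedBall.2 hξd)
  -- step 3 : commute the chain derivative with the first-slot quotient
  have h3 : (L.foldr pderiv' (fun y => Dq S (fun u => k u y) z)) ξ
      = Dq S (fun u => (L.foldr pderiv' (fun y' => k u y')) ξ) z :=
    chain_Dq hΩ (g := fun u y => k u y) hyp.1 S z hSball L (List.suffix_refl L) ξ hξΩ
  -- step 4 : peel the first slot
  have hch1 : ∀ l₁ (i : Fin d) l₂, L = l₁ ++ i :: l₂ → ∀ u ∈ Metric.closedBall z r,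
      HasDerivAt (fun s : ℝ =>
          (l₂.foldr pderiv' (fun x => (L.foldr pderiv' (fun y' => k x y')) ξ)) (u + s • eu i))
        (pderiv' i (l₂.foldr pderiv' (fun x => (L.foldr pderiv' (fun y' => k x y')) ξ)) u) 0 := by
    intro l₁ i l₂ hdec u hu
    exact pdiffOn_line (hyp.2.1 ξ hξΩ l₁ i l₂ hdec) (hball hu)
  obtain ⟨ζ, hζd, hζv⟩ := peel (c := z) (R := r) S L
    (fun u => (L.foldr pderiv' (fun y' => k u y')) ξ) hS hSne hch1 z (by simpa using hSsm)
  rw [dist_self, zero_add] at hζd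
  exact ⟨ζ, hζd, hSball (Metric.mem_closedBall.2 hζd), ξ, hξd, hξΩ,
    by rw [h1, hξv, h3, hζv]⟩

/-- `v` is the limit of the difference-quotient vectors at `z` along direction list `L`. -/
def ApproxAt (Φ : (Fin d → ℝ) → H) (v : H) (L : List (Fin d)) (z : Fin d → ℝ) : Prop :=
  ∀ ε > 0, ∃ δ > 0, ∀ S : List (Fin d × ℝ),
    S.map Prod.fst = L → (∀ p ∈ S, p.2 ≠ 0 ∧ |p.2| ≤ δ) → ‖Dq S Φ z - v‖ ≤ ε

theorem cauchy_est (hΩ : IsOpen Ω) (hkΦ : ∀ x ∈ Ω, ∀ y ∈ Ω, k x y = ⟪Φ x, Φ y⟫)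
    {L : List (Fin d)} (hyp : HypL Ω k L) {z : Fin d → ℝ} (hz : z ∈ Ω) :
    ∀ ε > 0, ∃ δ > 0, ∀ S T : List (Fin d × ℝ),
      S.map Prod.fst = L → T.map Prod.fst = L →
      (∀ p ∈ S, p.2 ≠ 0 ∧ |p.2| ≤ δ) → (∀ p ∈ T, p.2 ≠ 0 ∧ |p.2| ≤ δ) →
      ‖Dq S Φ z - Dq T Φ z‖ ≤ ε := by
  intro ε hε
  obtain ⟨r0, hr0, hr0sub⟩ := Metric.isOpen_iff.1 hΩ z hz
  set r := r0 / 2 with hrdef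
  have hr : 0 < r := by positivity
  have hball : Metric.closedBall z r ⊆ Ω := by
    refine subset_trans ?_ hr0sub
    intro u hu
    rw [Metric.mem_closedBall] at hu
    rw [Metric.mem_ball]
    rw [hrdef] at hu
    linarith
  set KM := fun p : (Fin d → ℝ) × (Fin d → ℝ) =>
    (L.foldr pderiv' (fun x => (L.foldr pderiv' (fun y' => k x y')) p.2)) p.1 with hKM
  have hcont : ContinuousWithinAt KM (Ω ×ˢ Ω) (z, z) :=
    hyp.2.2 (z, z) (by exact ⟨hz, hz⟩)
  have hη : (0:ℝ) < ε ^ 2 / 5 := by positivity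
  obtain ⟨δc, hδc, hδcP⟩ := Metric.continuousWithinAt_iff.1 hcont (ε ^ 2 / 5) hη
  set n := (L.length : ℝ) with hndef
  have hn : 0 ≤ n := by rw [hndef]; positivity
  set δ := min (r / (n + 1)) (δc / (n + 1)) with hδdef
  have hδ : 0 < δ := by
    apply lt_min <;> positivity
  refine ⟨δ, hδ, ?_⟩
  intro S T hS hT hSp hTp
  have hsum : ∀ (U : List (Fin d × ℝ)), U.map Prod.fst = L →
      (∀ p ∈ U, p.2 ≠ 0 ∧ |p.2| ≤ δ) → sumAbs U ≤ r ∧ sumAbs U < δc := by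
    intro U hU hUp
    have h1 : sumAbs U ≤ U.length * δ := sumAbs_le_len (fun p hp => (hUp p hp).2)
    have hlen : (U.length : ℝ) = n := by rw [hndef, ← hU, List.length_map]
    rw [hlen] at h1
    constructor
    · have h2 : n * δ ≤ n * (r / (n + 1)) :=
        mul_le_mul_of_nonneg_left (min_le_left _ _) hn
      have h3 : n * (r / (n + 1)) ≤ r := by
        rw [← mul_div_assoc, div_le_iff₀ (by positivity)]
        nlinarith
      linarith
    · have h2 : n * δ ≤ n * (δc / (n + 1)) :=
        mul_le_mul_of_nonneg_left (min_le_right _ _) hn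
      have h3 : n * (δc / (n + 1)) < δc := by
        rw [← mul_div_assoc, div_lt_iff₀ (by positivity)]
        nlinarith
      linarith
  have hKMest : ∀ (U V : List (Fin d × ℝ)), U.map Prod.fst = L → V.map Prod.fst = L →
      (∀ p ∈ U, p.2 ≠ 0 ∧ |p.2| ≤ δ) → (∀ p ∈ V, p.2 ≠ 0 ∧ |p.2| ≤ δ) →
      |⟪Dq U Φ z, Dq V Φ z⟫ - KM (z, z)| < ε ^ 2 / 5 := by
    intro U V hU hV hUp hVp
    obtain ⟨hU1, hU2⟩ := hsum U hU hUp
    obtain ⟨hV1, hV2⟩ := hsum V hV hVp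
    obtain ⟨ζ, hζd, hζΩ, ξ, hξd, hξΩ, hval⟩ := key_identity hΩ hkΦ hyp hz
      hball hball U V hU hV (fun p hp => (hUp p hp).1) (fun p hp => (hVp p hp).1) hU1 hV1
    rw [hval]
    have hd : dist ((ζ, ξ) : (Fin d → ℝ) × (Fin d → ℝ)) (z, z) < δc := by
      rw [Prod.dist_eq]
      apply max_lt <;> [linarith; linarith]
    have := hδcP (Set.mk_mem_prod hζΩ hξΩ) hd
    rw [Real.dist_eq] at this
    exact this
  have haa := hKMest S S hS hS hSp hSp
  have hab := hKMest S T hS hT hSp hTp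
  have hbb := hKMest T T hT hT hTp hTp
  set a := Dq S Φ z
  set b := Dq T Φ z
  have hnorm : ‖a - b‖ ^ 2 = ⟪a, a⟫ - 2 * ⟪a, b⟫ + ⟪b, b⟫ := by
    rw [norm_sub_sq_real, ← real_inner_self_eq_norm_sq, ← real_inner_self_eq_norm_sq]
  have hsq : ‖a - b‖ ^ 2 ≤ 4 * (ε ^ 2 / 5) := by
    rw [hnorm]
    have h1 := abs_lt.1 haa
    have h2 := abs_lt.1 hab
    have h3 := abs_lt.1 hbb
    have e1 := h1.1; have e2 := h1.2
    have e3 := h2.1; have e4 := h2.2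
    have e5 := h3.1; have e6 := h3.2
    linarith
  nlinarith [norm_nonneg (a - b), sq_nonneg (‖a - b‖ + ε), sq_nonneg (‖a - b‖ - ε)]

end main

section limits
variable {Ω : Set (Fin d → ℝ)}
variable {H : Type*} [NormedAddCommGroup H] [InnerProductSpace ℝ H] [CompleteSpace H]
variable {Φ : (Fin d → ℝ) → H} {k : (Fin d → ℝ) → (Fin d → ℝ) → ℝ}

theorem exists_approx (hΩ : IsOpen Ω) (hkΦ : ∀ x ∈ Ω, ∀ y ∈ Ω, k x y = ⟪Φ x, Φ y⟫)
    {L : List (Fin d)} (hyp : HypL Ω k L) {z : Fin d → ℝ} (hz : z ∈ Ω) :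
    ∃ v : H, ApproxAt Φ v L z := by
  have hc : ∀ n : ℕ, ∃ δ, 0 < δ ∧ ∀ S T : List (Fin d × ℝ),
      S.map Prod.fst = L → T.map Prod.fst = L →
      (∀ p ∈ S, p.2 ≠ 0 ∧ |p.2| ≤ δ) → (∀ p ∈ T, p.2 ≠ 0 ∧ |p.2| ≤ δ) →
      ‖Dq S Φ z - Dq T Φ z‖ ≤ 1 / (n + 1) := by
    intro n
    obtain ⟨δ, hδ, hP⟩ := cauchy_est hΩ hkΦ hyp hz (1 / (n + 1)) (by positivity)
    exact ⟨δ, hδ, hP⟩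
  choose δ₀ hδ₀ using hc
  let g : ℕ → ℝ := fun n => Nat.rec (δ₀ 0) (fun m r => min (δ₀ (m + 1)) r) n
  have hgpos : ∀ n, 0 < g n := by
    intro n
    induction n with
    | zero => exact (hδ₀ 0).1
    | succ m ih => exact lt_min (hδ₀ (m + 1)).1 ih
  have hgstep : ∀ n, g (n + 1) ≤ g n := fun n => min_le_right _ _
  have hgdec : ∀ m n, m ≤ n → g n ≤ g m := fun m n h =>
    (antitone_nat_of_succ_le hgstep) h
  have hgle : ∀ n, g n ≤ δ₀ n := by
    intro n
    cases n with
    | zero => exact le_refl _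
    | succ m => exact min_le_left _ _
  let u : ℕ → H := fun n => Dq (L.map fun i => (i, g n)) Φ z
  have hdirs : ∀ n, (L.map fun i => (i, g n)).map Prod.fst = L := by
    intro n
    rw [List.map_map]
    have : (Prod.fst ∘ fun i : Fin d => (i, g n)) = id := rfl
    rw [this, List.map_id]
  have hparams : ∀ N n, N ≤ n → ∀ p ∈ L.map fun i => (i, g n), p.2 ≠ 0 ∧ |p.2| ≤ δ₀ N := by
    intro N n hNn p hp
    obtain ⟨i, _, rfl⟩ := List.mem_map.1 hp
    refine ⟨(hgpos n).ne', ?_⟩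
    rw [abs_of_pos (hgpos n)]
    exact le_trans (hgdec N n hNn) (hgle N)
  have hest : ∀ N m n, N ≤ m → N ≤ n → ‖u m - u n‖ ≤ 1 / (N + 1) := by
    intro N m n hm hn
    exact (hδ₀ N).2 _ _ (hdirs m) (hdirs n) (hparams N m hm) (hparams N n hn)
  have hcauchy : CauchySeq u := by
    rw [Metric.cauchySeq_iff']
    intro ε hε
    obtain ⟨N, hN⟩ := exists_nat_one_div_lt hε
    refine ⟨N, fun n hn => ?_⟩
    rw [dist_eq_norm]
    calc ‖u n - u N‖ ≤ 1 / (N + 1) := hest N n N hn le_rfl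
    _ < ε := by exact_mod_cast hN
  obtain ⟨v, hv⟩ := cauchySeq_tendsto_of_complete hcauchy
  refine ⟨v, ?_⟩
  intro ε hε
  obtain ⟨N, hN⟩ := exists_nat_one_div_lt (half_pos hε)
  obtain ⟨N', hN'⟩ := Metric.tendsto_atTop.1 hv (ε / 2) (half_pos hε)
  set m := max N N' with hm
  refine ⟨g N, hgpos N, ?_⟩
  intro S hSdir hSp
  have h1 : ‖Dq S Φ z - u m‖ ≤ 1 / (N + 1) := by
    apply (hδ₀ N).2 S _ hSdir (hdirs m)
    · intro p hp
      refine ⟨(hSp p hp).1, le_trans (hSp p hp).2 (hgle N)⟩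
    · exact hparams N m (le_max_left _ _)
  have h2 : ‖u m - v‖ < ε / 2 := by
    rw [← dist_eq_norm]
    exact hN' m (le_max_right _ _)
  calc ‖Dq S Φ z - v‖ ≤ ‖Dq S Φ z - u m‖ + ‖u m - v‖ := by
        have := norm_add_le (Dq S Φ z - u m) (u m - v)
        simpa using this
  _ ≤ 1 / (N + 1) + ε / 2 := by linarith
  _ ≤ ε / 2 + ε / 2 := by
        have : (1:ℝ) / (N + 1) ≤ ε / 2 := by
          have : (1:ℝ) / (N + 1) < ε / 2 := by exact_mod_cast hN
          linarith
        linarith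
  _ = ε := by ring

theorem main_claim (hΩ : IsOpen Ω) (hkΦ : ∀ x ∈ Ω, ∀ y ∈ Ω, k x y = ⟪Φ x, Φ y⟫) :
    ∀ L : List (Fin d), (∀ L₂, L₂ <:+ L → HypL Ω k L₂) →
    ∃ Ψ : (Fin d → ℝ) → H,
      (∀ z ∈ Ω, ∀ f : H, (L.foldr pderiv' (fun y => ⟪f, Φ y⟫)) z = ⟪f, Ψ z⟫) ∧
      (∀ z ∈ Ω, ApproxAt Φ (Ψ z) L z) := by
  intro L
  induction L with
  | nil =>
    intro _
    refine ⟨Φ, fun z _ f => rfl, fun z _ ε hε => ⟨1, one_pos, ?_⟩⟩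
    intro S hSdir _
    obtain rfl : S = [] := List.map_eq_nil_iff.1 hSdir
    show ‖Φ z - Φ z‖ ≤ ε
    simp [hε.le]
  | cons j L' ih =>
    intro hyps
    obtain ⟨Ψ', hΨ'i, hΨ'ap⟩ := ih (fun L₂ h => hyps L₂ (h.trans (L'.suffix_cons j)))
    have hyp : HypL Ω k (j :: L') := hyps (j :: L') (List.suffix_refl _)
    have hex : ∀ w, w ∈ Ω → ∃ v : H, ApproxAt Φ v (j :: L') w := fun w hw =>
      exists_approx hΩ hkΦ hyp hw
    classical
    set Ψ : (Fin d → ℝ) → H := fun w => if hw : w ∈ Ω then Classical.choose (hex w hw) else 0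
      with hΨdef
    have hΨap : ∀ w ∈ Ω, ApproxAt Φ (Ψ w) (j :: L') w := by
      intro w hw
      have : Ψ w = Classical.choose (hex w hw) := by
        rw [hΨdef]; exact dif_pos hw
      rw [this]
      exact Classical.choose_spec (hex w hw)
    -- the strong derivative of Ψ' in direction j is Ψ
    have hstrong : ∀ z ∈ Ω, HasDerivAt (fun s : ℝ => Ψ' (z + s • eu j)) (Ψ z) 0 := by
      intro z hz
      obtain ⟨r0, hr0, hr0sub⟩ := Metric.isOpen_iff.1 hΩ z hz
      have hr : 0 < r0 / 2 := by positivity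
      have hball : Metric.closedBall z (r0 / 2) ⊆ Ω := by
        intro w hw
        apply hr0sub
        rw [Metric.mem_closedBall] at hw
        rw [Metric.mem_ball]
        linarith
      rw [hasDerivAt_iff_tendsto_slope]
      rw [Metric.tendsto_nhdsWithin_nhds]
      intro ε hε
      obtain ⟨δ₁, hδ₁pos, hδ₁P⟩ := hΨap z hz (ε / 2) (half_pos hε)
      refine ⟨min δ₁ (r0 / 2), by positivity, ?_⟩
      intro s hs hsd
      have hs0 : s ≠ 0 := hs
      have habs : |s| < min δ₁ (r0 / 2) := by rwa [Real.dist_eq, sub_zero] at hsd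
      have habs' : 0 < |s| := abs_pos.2 hs0
      have hzs : z + s • eu j ∈ Ω := by
        apply hball
        rw [Metric.mem_closedBall, dist_self_add_left, norm_smul_eu]
        exact le_trans habs.le (min_le_right _ _)
      obtain ⟨δ₂, hδ₂pos, hδ₂P⟩ := hΨ'ap (z + s • eu j) hzs (|s| * ε / 8) (by positivity)
      obtain ⟨δ₃, hδ₃pos, hδ₃P⟩ := hΨ'ap z hz (|s| * ε / 8) (by positivity)
      set t := min δ₁ (min δ₂ δ₃) / 2 with htdef
      have ht : 0 < t := by positivity
      have ht1 : t ≤ δ₁ := by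
        rw [htdef]
        have := min_le_left δ₁ (min δ₂ δ₃)
        linarith
      have ht2 : t ≤ δ₂ := by
        rw [htdef]
        have h1 := min_le_right δ₁ (min δ₂ δ₃)
        have h2 := min_le_left δ₂ δ₃
        linarith
      have ht3 : t ≤ δ₃ := by
        rw [htdef]
        have h1 := min_le_right δ₁ (min δ₂ δ₃)
        have h2 := min_le_right δ₂ δ₃
        linarith
      set T := L'.map fun i => (i, t) with hTdef
      have hTdir : T.map Prod.fst = L' := by
        rw [hTdef, List.map_map]
        have : (Prod.fst ∘ fun i : Fin d => (i, t)) = id := rfl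
        rw [this, List.map_id]
      have hTparam : ∀ p ∈ T, p.2 = t := by
        intro p hp
        rw [hTdef] at hp
        obtain ⟨i, _, rfl⟩ := List.mem_map.1 hp
        rfl
      have hA : ‖Dq ((j, s) :: T) Φ z - Ψ z‖ ≤ ε / 2 := by
        apply hδ₁P
        · rw [List.map_cons, hTdir]
        · intro p hp
          rcases List.mem_cons.1 hp with rfl | hp'
          · exact ⟨hs0, le_trans habs.le (min_le_left _ _)⟩
          · rw [hTparam p hp']
            exact ⟨ht.ne', by rw [abs_of_pos ht]; exact ht1⟩
      have hB : ‖Dq T Φ (z + s • eu j) - Ψ' (z + s • eu j)‖ ≤ |s| * ε / 8 := by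
        apply hδ₂P T hTdir
        intro p hp
        rw [hTparam p hp]
        exact ⟨ht.ne', by rw [abs_of_pos ht]; exact ht2⟩
      have hC : ‖Dq T Φ z - Ψ' z‖ ≤ |s| * ε / 8 := by
        apply hδ₃P T hTdir
        intro p hp
        rw [hTparam p hp]
        exact ⟨ht.ne', by rw [abs_of_pos ht]; exact ht3⟩
      -- algebraic identity for the slope
      have hDq : Dq ((j, s) :: T) Φ z = s⁻¹ • (Dq T Φ (z + s • eu j) - Dq T Φ z) := rfl
      have hslope : slope (fun s' : ℝ => Ψ' (z + s' • eu j)) 0 s - Ψ z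
          = s⁻¹ • ((Ψ' (z + s • eu j) - Dq T Φ (z + s • eu j)) - (Ψ' z - Dq T Φ z))
            + (Dq ((j, s) :: T) Φ z - Ψ z) := by
        rw [slope_def_module, hDq]
        simp only [sub_zero, zero_smul, add_zero, smul_sub]
        abel
      rw [dist_eq_norm, hslope]
      have hn1 : ‖s⁻¹ • ((Ψ' (z + s • eu j) - Dq T Φ (z + s • eu j)) - (Ψ' z - Dq T Φ z))‖
          ≤ |s|⁻¹ * (|s| * ε / 8 + |s| * ε / 8) := by
        rw [norm_smul, Real.norm_eq_abs, abs_inv]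
        apply mul_le_mul_of_nonneg_left _ (by positivity)
        calc ‖(Ψ' (z + s • eu j) - Dq T Φ (z + s • eu j)) - (Ψ' z - Dq T Φ z)‖
            ≤ ‖Ψ' (z + s • eu j) - Dq T Φ (z + s • eu j)‖ + ‖Ψ' z - Dq T Φ z‖ :=
              norm_sub_le _ _
        _ ≤ |s| * ε / 8 + |s| * ε / 8 := by
              rw [← norm_neg (Ψ' (z + s • eu j) - Dq T Φ (z + s • eu j)),
                ← norm_neg (Ψ' z - Dq T Φ z)]
              simp only [neg_sub]
              exact add_le_add hB hC
      have hn2 : |s|⁻¹ * (|s| * ε / 8 + |s| * ε / 8) = ε / 4 := by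
        field_simp
        ring
      calc ‖_ + (Dq ((j, s) :: T) Φ z - Ψ z)‖
          ≤ ε / 4 + ε / 2 := by
            refine le_trans (norm_add_le _ _) ?_
            rw [hn2] at hn1
            exact add_le_add hn1 hA
      _ < ε := by linarith
    refine ⟨Ψ, ?_, fun z hz => hΨap z hz⟩
    intro z hz f
    show pderiv' j (L'.foldr pderiv' (fun y => ⟪f, Φ y⟫)) z = ⟪f, Ψ z⟫
    rw [pderiv'_congrOn hΩ (fun y hy => hΨ'i y hy f) hz]
    apply hasPD_deriv
    apply hasPD_iff_line.2
    have hH := hstrong z hz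
    have hcomp := ((innerSL ℝ f).hasFDerivAt).comp_hasDerivAt 0 hH
    simpa [Function.comp_def] using hcomp

end limits

section combinatorics

lemma flatMap_congr {l : List (Fin d)} {β γ : Fin d → ℕ}
    (h : ∀ i ∈ l, β i = γ i) :
    (l.flatMap fun i => List.replicate (β i) i) = l.flatMap fun i => List.replicate (γ i) i := by
  induction l with
  | nil => rfl
  | cons m l ih =>
    rw [List.flatMap_cons, List.flatMap_cons, h m (by simp),
      ih (fun i hi => h i (by simp [hi]))]

lemma suffix_flatMap : ∀ (l : List (Fin d)), l.Pairwise (· < ·) →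
    ∀ (β : Fin d → ℕ) (L : List (Fin d)),
    L <:+ (l.flatMap fun i => List.replicate (β i) i) →
    ∃ γ : Fin d → ℕ, (∀ i, γ i ≤ β i) ∧ (l.flatMap fun i => List.replicate (γ i) i) = L := by
  intro l
  induction l with
  | nil =>
    intro _ β L hL
    rw [List.flatMap_nil] at hL
    rw [List.suffix_nil] at hL
    exact ⟨fun _ => 0, fun i => Nat.zero_le _, by rw [hL]; rfl⟩
  | cons m l ih =>
    intro hpair β L hL
    have hmem : ∀ b ∈ l, m < b := (List.pairwise_cons.1 hpair).1
    have hmnotl : m ∉ l := fun hm => lt_irrefl m (hmem m hm)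
    obtain ⟨pre, hpre⟩ := hL
    rw [List.flatMap_cons] at hpre
    rcases List.append_eq_append_iff.1 hpre with ⟨a', ha1, ha2⟩ | ⟨c', hc1, hc2⟩
    · -- L = a' ++ flatMap l β with replicate (β m) m = pre ++ a'
      have ha'suf : a' <:+ List.replicate (β m) m := ⟨pre, ha1.symm⟩
      have ha'mem : ∀ b ∈ a', b = m := by
        intro b hb
        have := ha'suf.sublist.subset hb
        exact (List.eq_of_mem_replicate this)
      have ha'rep : a' = List.replicate a'.length m := List.eq_replicate_length.2 ha'mem
      have ha'len : a'.length ≤ β m := by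
        have := ha'suf.length_le
        simpa using this
      refine ⟨Function.update β m a'.length, ?_, ?_⟩
      · intro i
        by_cases hi : i = m
        · subst hi; rw [Function.update_self]; exact ha'len
        · rw [Function.update_of_ne hi]
      · rw [List.flatMap_cons, Function.update_self,
          flatMap_congr (γ := β) (fun i hi => Function.update_of_ne (by
            intro hh; exact hmnotl (hh ▸ hi)) _ _), ← ha'rep, ha2]
    · -- pre = flatMap-replicate ++ c' and flatMap l β = c' ++ L, so L <:+ flatMap l β
      have hLsuf : L <:+ (l.flatMap fun i => List.replicate (β i) i) := ⟨c', hc2.symm⟩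
      obtain ⟨γ₀, hγ₀le, hγ₀eq⟩ := ih (List.Pairwise.of_cons hpair) β L hLsuf
      refine ⟨Function.update γ₀ m 0, ?_, ?_⟩
      · intro i
        by_cases hi : i = m
        · subst hi; rw [Function.update_self]; exact Nat.zero_le _
        · rw [Function.update_of_ne hi]; exact hγ₀le i
      · rw [List.flatMap_cons, Function.update_self]
        rw [flatMap_congr (γ := γ₀) (fun i hi => Function.update_of_ne (by
          intro hh; exact hmnotl (hh ▸ hi)) _ _)]
        simpa using hγ₀eq

lemma pdSeq_eq_flatMap (α : Fin d → ℕ) :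
    pdSeq α = (List.finRange d).flatMap fun i => List.replicate (α i) i := by
  rw [pdSeq, List.ofFn_eq_map, List.flatMap_def]

lemma pdSeq_suffix {α : Fin d → ℕ} {L : List (Fin d)} (h : L <:+ pdSeq α) :
    ∃ β : Fin d → ℕ, pdSeq β = L ∧ ∀ i, β i ≤ α i := by
  rw [pdSeq_eq_flatMap] at h
  obtain ⟨γ, hγle, hγeq⟩ := suffix_flatMap (List.finRange d)
    (List.pairwise_lt_finRange d) α L h
  exact ⟨γ, by rw [pdSeq_eq_flatMap]; exact hγeq, hγle⟩

end combinatorics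

section instantiate
variable {Ω : Set (Fin d → ℝ)} {k : (Fin d → ℝ) → (Fin d → ℝ) → ℝ} {s : ℕ}

lemma hyp_of_kernelDiff (hkdiff : KernelDiff Ω s k) {α : Fin d → ℕ}
    (hα : (∑ i, α i) ≤ s) :
    ∀ L₂, L₂ <:+ pdSeq α → HypL Ω k L₂ := by
  intro L₂ hsuf
  obtain ⟨β, hβeq, hβle⟩ := pdSeq_suffix hsuf
  have hβs : (∑ i, β i) ≤ s :=
    le_trans (Finset.sum_le_sum fun i _ => hβle i) hα
  obtain ⟨hA, hB, hC⟩ := hkdiff β hβs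
  subst hβeq
  exact ⟨fun x hx => hA x hx, fun y hy => hB y hy, hC⟩

end instantiate

section gram
variable {H : Type*} [NormedAddCommGroup H] [InnerProductSpace ℝ H]

lemma gram_psd {ι : Type*} [Fintype ι] (v : ι → H) :
    Matrix.PosSemidef (Matrix.of fun a b : ι => (⟪v a, v b⟫ : ℝ)) := by
  rw [Matrix.posSemidef_iff_dotProduct_mulVec]
  constructor
  · ext a b
    simp only [Matrix.conjTranspose_apply, Matrix.of_apply, star_trivial]
    exact real_inner_comm _ _
  · intro x
    have hv : dotProduct (star x) (Matrix.mulVec (Matrix.of fun a b : ι => (⟪v a, v b⟫ : ℝ)) x)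
        = ∑ a, ∑ b, x a * (x b * ⟪v a, v b⟫) := by
      simp only [dotProduct, Matrix.mulVec, Matrix.of_apply, Pi.star_apply, star_trivial]
      apply Finset.sum_congr rfl
      intro a _
      rw [Finset.mul_sum]
      apply Finset.sum_congr rfl
      intro b _
      ring
    rw [hv]
    have hsum : ∑ a, ∑ b, x a * (x b * ⟪v a, v b⟫) = ⟪∑ a, x a • v a, ∑ b, x b • v b⟫ := by
      rw [sum_inner]
      apply Finset.sum_congr rfl
      intro a _
      rw [real_inner_smul_left, inner_sum, Finset.mul_sum]
      apply Finset.sum_congr rfl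
      intro b _
      rw [real_inner_smul_right]
    rw [hsum]
    exact real_inner_self_nonneg

end gram

end S3

open Matrix in
/-- The physics-informed Gram block matrix is positive semidefinite.
For points `x₁, …, x_n, z₁, …, z_m ∈ Ω`, the block matrix
`[[K_xx, H_xz], [H_xzᵀ, G_zz]]` with `[K_xx]_{ij} = k(x_i,x_j)`,
`[H_xz]_{ij} = (Id ⊗ D)k(x_i,z_j)`, `[G_zz]_{ij} = (D ⊗ D)k(z_i,z_j)`
is symmetric positive semidefinite. -/
theorem statement_3
    {d s : ℕ} {Ω : Set (Fin d → ℝ)}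
    (hΩopen : IsOpen Ω) (hΩbdd : Bornology.IsBounded Ω)
    {H : Type*} [NormedAddCommGroup H] [InnerProductSpace ℝ H] [CompleteSpace H]
    (ev : H →ₗ[ℝ] ((Fin d → ℝ) → ℝ))
    (hinj : ∀ f g : H, (∀ x ∈ Ω, ev f x = ev g x) → f = g)
    (Φ : (Fin d → ℝ) → H)
    (hrepr : ∀ f : H, ∀ x ∈ Ω, ev f x = ⟪f, Φ x⟫)
    (k : (Fin d → ℝ) → (Fin d → ℝ) → ℝ)
    (hkΦ : ∀ x ∈ Ω, ∀ y ∈ Ω, k x y = ⟪Φ x, Φ y⟫)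
    (hkdiff : KernelDiff Ω s k)
    (c : (Fin d → ℕ) → (Fin d → ℝ) → ℝ)
    (hc : CoeffCBdd Ω s c)
    {n m : ℕ} (x : Fin n → (Fin d → ℝ)) (z : Fin m → (Fin d → ℝ))
    (hx : ∀ i, x i ∈ Ω) (hz : ∀ j, z j ∈ Ω) :
    (Matrix.fromBlocks
      (Matrix.of fun i j : Fin n => k (x i) (x j))
      (Matrix.of fun (i : Fin n) (j : Fin m) => IdDk s c k (x i) (z j))
      (Matrix.of fun (i : Fin n) (j : Fin m) => IdDk s c k (x i) (z j))ᵀ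
      (Matrix.of fun i j : Fin m => DDk s c k (z i) (z j))).PosSemidef := by
    classical
  -- derivative feature maps for every multi-index appearing in `Dop`
  have hPhi : ∀ αf : Fin d → Fin (s + 1), ∃ Ψ : (Fin d → ℝ) → H,
      ((∑ i, ((αf i : ℕ))) ≤ s → ∀ w ∈ Ω, ∀ f : H,
        multiPD (fun i => (αf i : ℕ)) (fun y => ⟪f, Φ y⟫) w = ⟪f, Ψ w⟫) := by
    intro αf
    by_cases hcnd : (∑ i, ((αf i : ℕ))) ≤ s
    · obtain ⟨Ψ, h1, _⟩ := S3.main_claim hΩopen hkΦ (pdSeq fun i => (αf i : ℕ))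
        (S3.hyp_of_kernelDiff hkdiff hcnd)
      exact ⟨Ψ, fun _ => h1⟩
    · exact ⟨fun _ => 0, fun h => absurd h hcnd⟩
  choose PhiA hPhiA using hPhi
  set w : Fin m → H := fun jj => ∑ αf : Fin d → Fin (s + 1),
    (if (∑ i, ((αf i : ℕ))) ≤ s then c (fun i => (αf i : ℕ)) (z jj) else 0) • PhiA αf (z jj)
    with hwdef
  -- evaluation of (Id ⊗ D) k against features
  have hIdDk : ∀ u ∈ Ω, ∀ jj : Fin m, IdDk s c k u (z jj) = ⟪Φ u, w jj⟫ := by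
    intro u hu jj
    show (∑ αf : Fin d → Fin (s + 1),
      if (∑ i, ((αf i : ℕ))) ≤ s then
        c (fun i => (αf i : ℕ)) (z jj) * multiPD (fun i => (αf i : ℕ)) (fun z' => k u z') (z jj)
      else 0) = _
    rw [hwdef, inner_sum]
    apply Finset.sum_congr rfl
    intro αf _
    by_cases hcnd : (∑ i, ((αf i : ℕ))) ≤ s
    · rw [if_pos hcnd, if_pos hcnd, real_inner_smul_right]
      congr 1
      have hcg : multiPD (fun i => (αf i : ℕ)) (fun y => k u y) (z jj)
          = multiPD (fun i => (αf i : ℕ)) (fun y => ⟪Φ u, Φ y⟫) (z jj) :=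
        S3.foldr_congrOn hΩopen (fun y hy => hkΦ u hu y hy) _ _ (hz jj)
      rw [hcg]
      exact hPhiA αf hcnd (z jj) (hz jj) (Φ u)
    · rw [if_neg hcnd, if_neg hcnd, zero_smul, inner_zero_right]
  -- evaluation of (D ⊗ D) k against features
  have hDDk : ∀ ii jj : Fin m, DDk s c k (z ii) (z jj) = ⟪w jj, w ii⟫ := by
    intro ii jj
    show (∑ αf : Fin d → Fin (s + 1),
      if (∑ i, ((αf i : ℕ))) ≤ s then
        c (fun i => (αf i : ℕ)) (z ii) *
          multiPD (fun i => (αf i : ℕ)) (fun u => Dop s c (fun v => k u v) (z jj)) (z ii)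
      else 0) = _
    conv_rhs => rw [hwdef]
    rw [inner_sum]
    apply Finset.sum_congr rfl
    intro αf _
    by_cases hcnd : (∑ i, ((αf i : ℕ))) ≤ s
    · rw [if_pos hcnd, if_pos hcnd, real_inner_smul_right]
      congr 1
      have hcg : multiPD (fun i => (αf i : ℕ)) (fun u => Dop s c (fun v => k u v) (z jj)) (z ii)
          = multiPD (fun i => (αf i : ℕ)) (fun u => ⟪w jj, Φ u⟫) (z ii) := by
        apply S3.foldr_congrOn hΩopen _ _ _ (hz ii)
        intro u hu
        rw [show Dop s c (fun v => k u v) (z jj) = IdDk s c k u (z jj) from rfl,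
          hIdDk u hu jj]
        exact real_inner_comm _ _
      rw [hcg]
      exact hPhiA αf hcnd (z ii) (hz ii) (w jj)
    · rw [if_neg hcnd, if_neg hcnd, zero_smul, inner_zero_right]
  -- the matrix is the Gram matrix of the features
  set vv : (Fin n ⊕ Fin m) → H := Sum.elim (fun i => Φ (x i)) w with hvv
  have hM : (Matrix.fromBlocks
      (Matrix.of fun i j : Fin n => k (x i) (x j))
      (Matrix.of fun (i : Fin n) (j : Fin m) => IdDk s c k (x i) (z j))
      (Matrix.of fun (i : Fin n) (j : Fin m) => IdDk s c k (x i) (z j))ᵀ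
      (Matrix.of fun i j : Fin m => DDk s c k (z i) (z j)))
      = Matrix.of (fun a b => (⟪vv a, vv b⟫ : ℝ)) := by
    ext a b
    cases a with
    | inl i =>
      cases b with
      | inl i' =>
        simp only [Matrix.fromBlocks_apply₁₁, Matrix.of_apply, hvv, Sum.elim_inl]
        exact hkΦ _ (hx i) _ (hx i')
      | inr j' =>
        simp only [Matrix.fromBlocks_apply₁₂, Matrix.of_apply, hvv, Sum.elim_inl, Sum.elim_inr]
        exact hIdDk _ (hx i) j'
    | inr j =>
      cases b with
      | inl i' =>
        simp only [Matrix.fromBlocks_apply₂₁, Matrix.of_apply, Matrix.transpose_apply,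
          hvv, Sum.elim_inl, Sum.elim_inr]
        rw [hIdDk _ (hx i') j]
        exact real_inner_comm _ _
      | inr j' =>
        simp only [Matrix.fromBlocks_apply₂₂, Matrix.of_apply, hvv, Sum.elim_inr]
        rw [hDDk j j']
        exact real_inner_comm _ _
  rw [hM]
  exact S3.gram_psd vv
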